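/- Let U be a unitary k×k complex matrix, let P be an orthogonal projection on ℂ^k, and let δ ≥ 0 satisfy ‖[P, U]‖ ≤ δ. Let T be the compression of U to range(P), i.e. the map v ↦ P U v on range(P). Then ‖T T† − Id_{range(P)}‖ ≤ δ². -/

import Mathlib

/-- The compression of an operator `U` to the range of `P`: the map `v ↦ P (U v)`
on `range P`. -/
noncomputable def compress {E : Type*} [NormedAddCommGroup E] [InnerProductSpace ℂ E]
    (P U : E →L[ℂ] E) : (LinearMap.range (P : E →ₗ[ℂ] E)) →L[ℂ] (LinearMap.range (P : E →ₗ[ℂ] E)) :=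
  ((P ∘L U) ∘L (LinearMap.range (P : E →ₗ[ℂ] E)).subtypeL).codRestrict (LinearMap.range (P : E →ₗ[ℂ] E))
    (fun v => LinearMap.mem_range.mpr ⟨U v, rfl⟩)

set_option maxHeartbeats 1000000 in
theorem stmt4 {k : ℕ} (hk : 1 ≤ k)
    (E : Type*) [NormedAddCommGroup E] [InnerProductSpace ℂ E] [FiniteDimensional ℂ E]
    (hdim : Module.finrank ℂ E = k)
    (U : E →L[ℂ] E) (hU : U ∈ unitary (E →L[ℂ] E))
    (P : E →L[ℂ] E) (hPsa : IsSelfAdjoint P) (hPproj : P * P = P)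
    (δ : ℝ) (hδ0 : 0 ≤ δ)
    (hPU : ‖P * U - U * P‖ ≤ δ) :
    ‖compress P U * star (compress P U) - 1‖ ≤ δ ^ 2 := by
  have hPx : ∀ x : LinearMap.range (P : E →ₗ[ℂ] E), P (x : E) = (x : E) := by
    rintro ⟨x, y, rfl⟩
    have := congrArg (fun T : E →L[ℂ] E => T y) hPproj
    simpa using this
  have hPstar : star P = P := hPsa
  -- the adjoint of the compression is the compression of the adjoint
  have hstar : star (compress P U) = compress P (star U) := by
    rw [ContinuousLinearMap.star_eq_adjoint]
    symm
    rw [ContinuousLinearMap.eq_adjoint_iff]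
    intro x y
    simp only [compress, ContinuousLinearMap.coe_codRestrict_apply,
      ContinuousLinearMap.coe_comp', Function.comp_apply, Submodule.coe_subtypeL',
      Submodule.coe_subtype, Submodule.coe_inner]
    rw [ContinuousLinearMap.star_eq_adjoint]
    calc inner ℂ (P ((ContinuousLinearMap.adjoint U) (x : E))) (y : E)
        = inner ℂ ((ContinuousLinearMap.adjoint U) (x : E)) (P (y : E)) := by
          rw [← ContinuousLinearMap.adjoint_inner_left P, hPsa.adjoint_eq]
      _ = inner ℂ ((ContinuousLinearMap.adjoint U) (x : E)) (y : E) := by rw [hPx]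
      _ = inner ℂ (x : E) (U (y : E)) := by rw [ContinuousLinearMap.adjoint_inner_left]
      _ = inner ℂ (P (x : E)) (U (y : E)) := by rw [hPx]
      _ = inner ℂ (x : E) (P (U (y : E))) := by
          rw [← ContinuousLinearMap.adjoint_inner_left P, hPsa.adjoint_eq]
  set A : E →L[ℂ] E := P * U * (1 - P) with hAdef
  have hP1 : P * (1 - P) = 0 := by simp [mul_sub, hPproj]
  have hA : A = (P * U - U * P) * (1 - P) := by
    rw [hAdef, sub_mul, mul_assoc U P, hP1, mul_zero, sub_zero]
  have h1P : (1 - P) * (1 - P) = (1 - P) := by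
    simp [sub_mul, mul_sub, hPproj]
  have hUU : U * star U = 1 := hU.2
  have hstarA : star A = (1 - P) * star U * P := by
    simp [hAdef, star_sub, hPstar, mul_assoc]
  set D : E →L[ℂ] E := P - P * U * P * star U * P with hDdef
  have hD : D = A * star A := by
    rw [hstarA, hAdef]
    have e1 : P * U * (1 - P) * ((1 - P) * star U * P)
        = P * U * ((1 - P) * (1 - P)) * (star U * P) := by noncomm_ring
    rw [e1, h1P]
    have e2 : P * U * (1 - P) * (star U * P)
        = P * (U * star U) * P - P * U * P * star U * P := by noncomm_ring
    rw [e2, hUU, mul_one, hPproj, hDdef]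
  -- norm bounds
  have hQ : ‖(1 : E →L[ℂ] E) - P‖ ≤ 1 := by
    have hsa : IsSelfAdjoint ((1 : E →L[ℂ] E) - P) := (IsSelfAdjoint.one (E →L[ℂ] E)).sub hPsa
    have h2 : ‖(1 : E →L[ℂ] E) - P‖ * ‖(1 : E →L[ℂ] E) - P‖ = ‖(1 : E →L[ℂ] E) - P‖ := by
      rw [← CStarRing.norm_star_mul_self (x := (1 : E →L[ℂ] E) - P), hsa.star_eq, h1P]
    nlinarith [norm_nonneg ((1 : E →L[ℂ] E) - P)]
  have hAn : ‖A‖ ≤ δ := by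
    calc ‖A‖ = ‖(P * U - U * P) * (1 - P)‖ := by rw [hA]
      _ ≤ ‖P * U - U * P‖ * ‖(1 : E →L[ℂ] E) - P‖ := norm_mul_le _ _
      _ ≤ δ * 1 := by
          apply mul_le_mul hPU hQ (norm_nonneg _) hδ0
      _ = δ := mul_one δ
  have hDn : ‖D‖ ≤ δ ^ 2 := by
    calc ‖D‖ = ‖A * star A‖ := by rw [hD]
      _ = ‖A‖ * ‖A‖ := CStarRing.norm_self_mul_star
      _ ≤ δ * δ := mul_le_mul hAn hAn (norm_nonneg _) hδ0
      _ = δ ^ 2 := (sq δ).symm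
  -- pointwise bound
  apply ContinuousLinearMap.opNorm_le_bound _ (by positivity)
  intro v
  have hcoe : ((( compress P U * star (compress P U) - 1) v : LinearMap.range (P : E →ₗ[ℂ] E)) : E)
      = -(D (v : E)) := by
    rw [hstar]
    simp only [ContinuousLinearMap.sub_apply, ContinuousLinearMap.mul_apply,
      ContinuousLinearMap.one_apply, compress, ContinuousLinearMap.coe_codRestrict_apply,
      ContinuousLinearMap.coe_comp', Function.comp_apply, Submodule.coe_subtypeL',
      Submodule.coe_subtype, AddSubgroupClass.coe_sub, hDdef]
    simp only [ContinuousLinearMap.sub_apply, ContinuousLinearMap.mul_apply, hPx v]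
    abel
  have h1 : ‖(compress P U * star (compress P U) - 1) v‖ = ‖D (v : E)‖ := by
    rw [← Submodule.norm_coe, hcoe, norm_neg]
  rw [h1]
  calc ‖D (v : E)‖ ≤ ‖D‖ * ‖(v : E)‖ := D.le_opNorm _
    _ ≤ δ ^ 2 * ‖v‖ := by
        rw [Submodule.norm_coe]
        exact mul_le_mul_of_nonneg_right hDn (norm_nonneg _)
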